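/- For integers ℓ₁, ℓ₂ ≥ 0 and n ≥ ℓ₁ + ℓ₂ + 1, we have ∑_{L=1}^{n} (C(L-1, ℓ₁) · C(n-L, ℓ₂) / C(n, ℓ₁+ℓ₂+1)) · L² = (ℓ₁+1)(ℓ₁+2)(n+2)(n+1) / ((ℓ₁+ℓ₂+2)(ℓ₁+ℓ₂+3)) − (ℓ₁+1)(n+1)/(ℓ₁+ℓ₂+2). -/

import Mathlib

open Finset

lemma sum_range_choose' (b n : ℕ) :
    ∑ j ∈ Finset.range (n+1), Nat.choose j b = Nat.choose (n+1) (b+1) := by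
  rw [← Nat.sum_Icc_choose n b]
  symm
  apply Finset.sum_subset
  · intro x hx; simp_all
  · intro x hx hnx
    simp_all
    exact Nat.choose_eq_zero_of_lt (by omega)

lemma key (a b n : ℕ) :
    ∑ i ∈ Finset.range (n+1), Nat.choose i a * Nat.choose (n-i) b
      = Nat.choose (n+1) (a+b+1) := by
  induction a generalizing n with
  | zero =>
    simp only [Nat.choose_zero_right, one_mul, Nat.zero_add]
    rw [show (∑ x ∈ Finset.range (n+1), Nat.choose (n-x) b)
        = ∑ x ∈ Finset.range (n+1), Nat.choose ((n+1)-1-x) b from by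
      apply Finset.sum_congr rfl; intros; congr 1,
      Finset.sum_range_reflect (fun j => Nat.choose j b) (n+1)]
    exact sum_range_choose' b n
  | succ a ih =>
    induction n with
    | zero =>
      simp [Nat.choose_eq_zero_of_lt (show (1:ℕ) < a+1+b+1 by omega)]
    | succ n ihn =>
      rw [Finset.sum_range_succ']
      simp only [Nat.choose_succ_succ, Nat.succ_sub_succ, add_mul, Nat.choose_zero_succ,
        zero_mul, add_zero, Finset.sum_add_distrib]
      rw [ih n, ihn]
      have h : a+1+b = a+b+1 := by omega
      rw [h]
      simp only [Nat.succ_eq_add_one]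
      rw [Nat.choose_succ_succ n (a+b+1)]

theorem stmt_0 (l1 l2 n : ℕ) (hn : l1 + l2 + 1 ≤ n) :
    ∑ L ∈ Finset.Icc 1 n,
        ((Nat.choose (L - 1) l1 : ℝ) * (Nat.choose (n - L) l2) /
            (Nat.choose n (l1 + l2 + 1))) * (L : ℝ) ^ 2
      = ((l1 : ℝ) + 1) * ((l1 : ℝ) + 2) * ((n : ℝ) + 2) * ((n : ℝ) + 1) /
            (((l1 : ℝ) + (l2 : ℝ) + 2) * ((l1 : ℝ) + (l2 : ℝ) + 3))
        - ((l1 : ℝ) + 1) * ((n : ℝ) + 1) / ((l1 : ℝ) + (l2 : ℝ) + 2) := by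
  have hD : (Nat.choose n (l1+l2+1) : ℝ) ≠ 0 := by
    exact_mod_cast (Nat.choose_pos hn).ne'
  -- sum A
  have hA : ∑ L ∈ Finset.Icc 1 n, Nat.choose L (l1+1) * Nat.choose (n-L) l2
      = Nat.choose (n+1) (l1+l2+2) := by
    have h := key (l1+1) l2 n
    rw [show Finset.range (n+1) = insert 0 (Finset.Icc 1 n) from by
          ext x; simp; omega,
        Finset.sum_insert (by simp)] at h
    simp only [Nat.choose_zero_succ, zero_mul, zero_add] at h
    rw [h]; congr 1; omega
  -- sum B
  have hB : ∑ L ∈ Finset.Icc 1 n, Nat.choose (L+1) (l1+2) * Nat.choose (n-L) l2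
      = Nat.choose (n+2) (l1+l2+3) := by
    have h := key (l1+2) l2 (n+1)
    rw [Finset.sum_range_succ'] at h
    simp only [Nat.choose_zero_succ, zero_mul, add_zero, Nat.succ_sub_succ,
      Nat.add_sub_cancel] at h
    rw [show Finset.range (n+1) = insert 0 (Finset.Icc 1 n) from by
          ext x; simp; omega,
        Finset.sum_insert (by simp)] at h
    have h01 : Nat.choose (0+1) (l1+2) = 0 := Nat.choose_eq_zero_of_lt (by omega)
    rw [h01, zero_mul, zero_add] at h
    rw [h]; (congr 1; omega)
  -- termwise identity
  have hterm : ∀ L ∈ Finset.Icc 1 n,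
      (Nat.choose (L-1) l1 : ℝ) * (Nat.choose (n-L) l2) / (Nat.choose n (l1+l2+1)) * (L:ℝ)^2
        = (((l1:ℝ)+1)*((l1:ℝ)+2) * ((Nat.choose (L+1) (l1+2) * Nat.choose (n-L) l2 : ℕ) : ℝ)
          - ((l1:ℝ)+1) * ((Nat.choose L (l1+1) * Nat.choose (n-L) l2 : ℕ) : ℝ))
          / (Nat.choose n (l1+l2+1)) := by
    intro L hL
    simp only [Finset.mem_Icc] at hL
    have e1 : L * Nat.choose (L-1) l1 = Nat.choose L (l1+1) * (l1+1) := by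
      have h := Nat.add_one_mul_choose_eq (L-1) l1
      rwa [Nat.sub_add_cancel hL.1] at h
    have e2 : (L+1) * Nat.choose L (l1+1) = Nat.choose (L+1) (l1+2) * (l1+2) := by
      have h := Nat.add_one_mul_choose_eq L (l1+1)
      simpa [Nat.succ_eq_add_one] using h
    have e1' : (L:ℝ) * Nat.choose (L-1) l1 = Nat.choose L (l1+1) * ((l1:ℝ)+1) := by
      exact_mod_cast e1
    have e2' : ((L:ℝ)+1) * Nat.choose L (l1+1) = Nat.choose (L+1) (l1+2) * ((l1:ℝ)+2) := by
      exact_mod_cast e2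
    rw [div_mul_eq_mul_div]
    congr 1
    push_cast
    linear_combination (Nat.choose (n-L) l2 : ℝ) * ((L:ℝ) + 1) * e1'
      + ((l1:ℝ)+1) * (Nat.choose (n-L) l2 : ℝ) * e2'
      - (Nat.choose (n-L) l2 : ℝ) * e1'
  rw [Finset.sum_congr rfl hterm, ← Finset.sum_div]
  rw [Finset.sum_sub_distrib, ← Finset.mul_sum, ← Finset.mul_sum,
    ← Nat.cast_sum, ← Nat.cast_sum, hA, hB]
  -- final algebra
  have hr1 : ((n:ℝ)+1) * (Nat.choose n (l1+l2+1) : ℝ)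
      = (Nat.choose (n+1) (l1+l2+2) : ℝ) * ((l1:ℝ)+(l2:ℝ)+2) := by
    have h := Nat.add_one_mul_choose_eq n (l1+l2+1)
    have h' : (n+1) * Nat.choose n (l1+l2+1) = Nat.choose (n+1) (l1+l2+2) * (l1+l2+2) := by
      simpa [Nat.succ_eq_add_one] using h
    exact_mod_cast h'
  have hr2 : ((n:ℝ)+2) * (Nat.choose (n+1) (l1+l2+2) : ℝ)
      = (Nat.choose (n+2) (l1+l2+3) : ℝ) * ((l1:ℝ)+(l2:ℝ)+3) := by
    have h := Nat.add_one_mul_choose_eq (n+1) (l1+l2+2)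
    have h' : (n+2) * Nat.choose (n+1) (l1+l2+2) = Nat.choose (n+2) (l1+l2+3) * (l1+l2+3) := by
      simpa [Nat.succ_eq_add_one, show n+1+1 = n+2 from rfl] using h
    exact_mod_cast h'
  have h2 : ((l1:ℝ)+(l2:ℝ)+2) ≠ 0 := by positivity
  have h3 : ((l1:ℝ)+(l2:ℝ)+3) ≠ 0 := by positivity
  have eA : (Nat.choose (n+1) (l1+l2+2) : ℝ)
      = ((n:ℝ)+1) * (Nat.choose n (l1+l2+1) : ℝ) / ((l1:ℝ)+(l2:ℝ)+2) := by
    field_simp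
    linarith [hr1]
  have eB : (Nat.choose (n+2) (l1+l2+3) : ℝ)
      = ((n:ℝ)+2) * (Nat.choose (n+1) (l1+l2+2) : ℝ) / ((l1:ℝ)+(l2:ℝ)+3) := by
    field_simp
    linarith [hr2]
  rw [eB, eA]
  field_simp
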